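/- Let k be a field, h a finite-dimensional Lie algebra over k, and M a finite-dimensional Lie module over h with action (x,u) ↦ x·u. For a linear map σ : M → h define dσ(x)(u) = [x, σ(u)] − σ(x·u) and δσ(u₁,u₂) = σ(u₁)·u₂ − σ(u₂)·u₁. Then for all x ∈ h and u₁, u₂ ∈ M: dσ(x)(u₁)·u₂ − dσ(x)(u₂)·u₁ = x·(δσ(u₁,u₂)) − δσ(x·u₁, u₂) − δσ(u₁, x·u₂); i.e. δ(dσ) = d(δσ), where δ is the operator induced by the module action and d is the Chevalley–Eilenberg differential. -/
import Mathlib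

/-- For a finite-dimensional Lie module `M` over a finite-dimensional Lie
algebra `h`, a linear map `σ : M → h`, with `dσ(x)(u) = [x, σu] − σ(x·u)` and
`δσ(u₁,u₂) = σ(u₁)·u₂ − σ(u₂)·u₁`, one has `δ(dσ) = d(δσ)`:
`dσ(x)(u₁)·u₂ − dσ(x)(u₂)·u₁ = x·δσ(u₁,u₂) − δσ(x·u₁,u₂) − δσ(u₁,x·u₂)`. -/
theorem delta_d_commute_on_zero_cochains
    {k : Type*} [Field k] {h : Type*} [LieRing h] [LieAlgebra k h]
    [FiniteDimensional k h]
    {M : Type*} [AddCommGroup M] [Module k M] [LieRingModule h M] [LieModule k h M]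
    [FiniteDimensional k M]
    (σ : M →ₗ[k] h)
    (dσ : h → M → h) (hdσ : ∀ (x : h) (u : M), dσ x u = ⁅x, σ u⁆ - σ ⁅x, u⁆)
    (δσ : M → M → M) (hδσ : ∀ u₁ u₂ : M, δσ u₁ u₂ = ⁅σ u₁, u₂⁆ - ⁅σ u₂, u₁⁆) :
    ∀ (x : h) (u₁ u₂ : M),
      ⁅dσ x u₁, u₂⁆ - ⁅dσ x u₂, u₁⁆
        = ⁅x, δσ u₁ u₂⁆ - δσ ⁅x, u₁⁆ u₂ - δσ u₁ ⁅x, u₂⁆ := by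
  intro x u₁ u₂
  simp only [hdσ, hδσ, sub_lie, lie_sub, lie_lie]
  abel
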